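/- arXiv:1801.04198 — 2 statements merged into one kernel-verified Lean document; each statement's English description precedes it below -/
import Mathlib

section
/- The function C(x₁,x₃,p₁,p₃) = x₃²/2 + x₁ − 1/x₁ Poisson-commutes with the Hamiltonian H = p₁x₃ − p₃/x₁² − p₃ on the domain x₁ ≠ 0. -/
/-- `C = x₃²/2 + x₁ - 1/x₁` Poisson-commutes with
`H = p₁x₃ - p₃/x₁² - p₃` on `x₁ ≠ 0`, where
`{F,G} = ∂F/∂x₁ ∂G/∂p₁ + ∂F/∂x₃ ∂G/∂p₃ - ∂F/∂p₁ ∂G/∂x₁ - ∂F/∂p₃ ∂G/∂x₃`. -/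
theorem poisson_commutes
    (C H : ℂ → ℂ → ℂ → ℂ → ℂ)
    (hC : ∀ x₁ x₃ p₁ p₃, C x₁ x₃ p₁ p₃ = x₃ ^ 2 / 2 + x₁ - 1 / x₁)
    (hH : ∀ x₁ x₃ p₁ p₃, H x₁ x₃ p₁ p₃ = p₁ * x₃ - p₃ / x₁ ^ 2 - p₃)
    (x₁ x₃ p₁ p₃ : ℂ) (hx₁ : x₁ ≠ 0) :
    deriv (fun q => C q x₃ p₁ p₃) x₁ * deriv (fun q => H x₁ x₃ q p₃) p₁
      + deriv (fun q => C x₁ q p₁ p₃) x₃ * deriv (fun q => H x₁ x₃ p₁ q) p₃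
      - deriv (fun q => C x₁ x₃ q p₃) p₁ * deriv (fun q => H q x₃ p₁ p₃) x₁
      - deriv (fun q => C x₁ x₃ p₁ q) p₃ * deriv (fun q => H x₁ q p₁ p₃) x₃ = 0 := by
  simp only [hC, hH]
  have d1 : deriv (fun q : ℂ => x₃ ^ 2 / 2 + q - 1 / q) x₁ = 1 + 1 / x₁ ^ 2 := by
    have h : HasDerivAt (fun q : ℂ => x₃ ^ 2 / 2 + q - 1 / q) (1 + 1 / x₁ ^ 2) x₁ := by
      have h1 : HasDerivAt (fun q : ℂ => x₃ ^ 2 / 2 + q) 1 x₁ :=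
        (hasDerivAt_id x₁).const_add _
      have h2 : HasDerivAt (fun q : ℂ => 1 / q) (-(x₁ ^ 2)⁻¹) x₁ := by
        simpa [one_div] using hasDerivAt_inv hx₁
      simpa [one_div, sub_neg_eq_add] using h1.fun_sub h2
    exact h.deriv
  have d2 : deriv (fun q : ℂ => q * x₃ - p₃ / x₁ ^ 2 - p₃) p₁ = x₃ := by
    have h : HasDerivAt (fun q : ℂ => q * x₃ - p₃ / x₁ ^ 2 - p₃) x₃ p₁ := by
      simpa using (((hasDerivAt_id p₁).mul_const x₃).sub_const (p₃ / x₁ ^ 2)).sub_const p₃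
    exact h.deriv
  have d3 : deriv (fun q : ℂ => q ^ 2 / 2 + x₁ - 1 / x₁) x₃ = x₃ := by
    have h : HasDerivAt (fun q : ℂ => q ^ 2 / 2 + x₁ - 1 / x₁) x₃ x₃ := by
      have h1 : HasDerivAt (fun q : ℂ => q ^ 2) (2 * x₃) x₃ := by
        simpa using hasDerivAt_pow 2 x₃
      have h2 := ((h1.div_const 2).add_const x₁).sub_const (1 / x₁)
      simpa [mul_comm, mul_div_assoc] using h2
    exact h.deriv
  have d4 : deriv (fun q : ℂ => p₁ * x₃ - q / x₁ ^ 2 - q) p₃ = -(1 / x₁ ^ 2) - 1 := by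
    have h : HasDerivAt (fun q : ℂ => p₁ * x₃ - q / x₁ ^ 2 - q) (-(1 / x₁ ^ 2) - 1) p₃ := by
      have h1 : HasDerivAt (fun q : ℂ => p₁ * x₃ - q / x₁ ^ 2) (-(1 / x₁ ^ 2)) p₃ := by
        simpa [one_div] using (hasDerivAt_const p₃ (p₁ * x₃)).fun_sub ((hasDerivAt_id p₃).div_const (x₁ ^ 2))
      simpa using h1.fun_sub (hasDerivAt_id p₃)
    exact h.deriv
  have d5 : deriv (fun _ : ℂ => x₃ ^ 2 / 2 + x₁ - 1 / x₁) p₁ = 0 := deriv_const _ _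
  have d6 : deriv (fun _ : ℂ => x₃ ^ 2 / 2 + x₁ - 1 / x₁) p₃ = 0 := deriv_const _ _
  rw [d1, d2, d3, d4, d5, d6]
  ring
end

section
/- More generally, for constants c₁, c₂ ∈ ℂ, the function p₃(s) = (√(s² − Cs − 1)/√s)·(c₁ ∫ s^{3/2} (s² − Cs − 1)^{−3/2} ds + c₂) solves 2(C + 1/s − s) p₃'' − (1 + 1/s²) p₃' − 2p₃/s³ = 0 on a simply connected domain avoiding 0 and the zeros of s² − Cs − 1. -/
set_option maxHeartbeats 2000000 in
/-- General solution: for constants `c₁, c₂ ∈ ℂ` and a holomorphic primitive `F`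
of `s^{3/2}(s² - Cs - 1)^{-3/2} = f³/g³` (with `f = √s`, `g = √(s² - Cs - 1)`
fixed branches), `p₃(s) = (g/f)(c₁ F + c₂)` solves
`2(C + 1/s - s) p₃'' - (1 + 1/s²) p₃' - 2p₃/s³ = 0`. -/
theorem general_solution_ode
    (C c₁ c₂ : ℂ) (U : Set ℂ) (hU : IsOpen U) (hU' : IsPreconnected U)
    (f g F : ℂ → ℂ)
    (hf : DifferentiableOn ℂ f U) (hg : DifferentiableOn ℂ g U)
    (hf2 : ∀ s ∈ U, (f s) ^ 2 = s) (hg2 : ∀ s ∈ U, (g s) ^ 2 = s ^ 2 - C * s - 1)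
    (h0 : ∀ s ∈ U, s ≠ 0) (hroot : ∀ s ∈ U, s ^ 2 - C * s - 1 ≠ 0)
    (hF : ∀ s ∈ U, HasDerivAt F ((f s) ^ 3 / (g s) ^ 3) s) :
    ∀ s ∈ U,
      2 * (C + 1 / s - s) *
          deriv (deriv (fun z => g z / f z * (c₁ * F z + c₂))) s
        - (1 + 1 / s ^ 2) * deriv (fun z => g z / f z * (c₁ * F z + c₂)) s
        - 2 * (g s / f s * (c₁ * F s + c₂)) / s ^ 3 = 0 := by
  have hfne : ∀ z ∈ U, f z ≠ 0 := by
    intro z hz h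
    exact h0 z hz (by rw [← hf2 z hz, h]; ring)
  have hgne : ∀ z ∈ U, g z ≠ 0 := by
    intro z hz h
    exact hroot z hz (by rw [← hg2 z hz, h]; ring)
  have hfd : ∀ z ∈ U, HasDerivAt f (1 / (2 * f z)) z := by
    intro z hz
    have hdz : HasDerivAt f (deriv f z) z :=
      (hf.differentiableAt (hU.mem_nhds hz)).hasDerivAt
    have hsq : HasDerivAt (fun w => f w ^ 2) (2 * f z ^ 1 * deriv f z) z := by
      simpa using hdz.fun_pow 2
    have heq : (fun w => f w ^ 2) =ᶠ[nhds z] fun w => w :=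
      Filter.eventuallyEq_of_mem (hU.mem_nhds hz) (fun w hw => hf2 w hw)
    have hid : HasDerivAt (fun w : ℂ => w) (2 * f z ^ 1 * deriv f z) z :=
      hsq.congr_of_eventuallyEq heq.symm
    have h1 : 2 * f z ^ 1 * deriv f z = 1 := hid.unique (hasDerivAt_id z)
    have h2 : deriv f z = 1 / (2 * f z) := by
      have hne := hfne z hz
      field_simp
      linear_combination h1
    rw [← h2]; exact hdz
  have hgd : ∀ z ∈ U, HasDerivAt g ((2 * z - C) / (2 * g z)) z := by
    intro z hz
    have hdz : HasDerivAt g (deriv g z) z :=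
      (hg.differentiableAt (hU.mem_nhds hz)).hasDerivAt
    have hsq : HasDerivAt (fun w => g w ^ 2) (2 * g z ^ 1 * deriv g z) z := by
      simpa using hdz.fun_pow 2
    have heq : (fun w => g w ^ 2) =ᶠ[nhds z] fun w => w ^ 2 - C * w - 1 :=
      Filter.eventuallyEq_of_mem (hU.mem_nhds hz) (fun w hw => hg2 w hw)
    have hpoly : HasDerivAt (fun w : ℂ => w ^ 2 - C * w - 1) (2 * g z ^ 1 * deriv g z) z :=
      hsq.congr_of_eventuallyEq heq.symm
    have hpoly' : HasDerivAt (fun w : ℂ => w ^ 2 - C * w - 1) (2 * z - C) z := by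
      simpa using (((hasDerivAt_pow 2 z).sub ((hasDerivAt_id z).const_mul C)).sub_const 1)
    have h1 : 2 * g z ^ 1 * deriv g z = 2 * z - C := hpoly.unique hpoly'
    have h2 : deriv g z = (2 * z - C) / (2 * g z) := by
      have hne := hgne z hz
      field_simp
      linear_combination h1
    rw [← h2]; exact hdz
  -- first derivative function
  set P1 : ℂ → ℂ := fun z =>
    (z ^ 2 + 1) / (2 * z * f z * g z) * (c₁ * F z + c₂)
      + c₁ * z / (z ^ 2 - C * z - 1) with hP1def
  have hP1 : ∀ z ∈ U, HasDerivAt (fun w => g w / f w * (c₁ * F w + c₂)) (P1 z) z := by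
    intro z hz
    have ha := hf2 z hz; have hb := hg2 z hz
    have hane := hfne z hz; have hbne := hgne z hz
    have hzne := h0 z hz; have hrne := hroot z hz
    have hq : HasDerivAt (fun w => g w / f w)
        (((2 * z - C) / (2 * g z) * f z - g z * (1 / (2 * f z))) / f z ^ 2) z :=
      (hgd z hz).div (hfd z hz) hane
    have hlin : HasDerivAt (fun w => c₁ * F w + c₂) (c₁ * (f z ^ 3 / g z ^ 3)) z :=
      ((hF z hz).const_mul c₁).add_const c₂
    have := hq.fun_mul hlin
    refine this.congr_deriv (Eq.symm ?_)
    rw [hP1def]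
    have d1 : 2 * z * f z * g z * (z ^ 2 - C * z - 1) ≠ 0 := by
      exact mul_ne_zero (mul_ne_zero (mul_ne_zero (mul_ne_zero two_ne_zero hzne) hane) hbne) hrne
    have d2 : 2 * g z * (2 * f z) * f z ^ 2 * (f z * g z ^ 3) ≠ 0 := by
      exact mul_ne_zero (mul_ne_zero (mul_ne_zero (mul_ne_zero two_ne_zero hbne)
        (mul_ne_zero two_ne_zero hane)) (pow_ne_zero 2 hane))
        (mul_ne_zero hane (pow_ne_zero 3 hbne))
    beta_reduce
    generalize f z = a at ha hane ⊢
    generalize g z = b at hb hbne ⊢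
    have hC : C = (z ^ 2 - 1 - b ^ 2) / z := by
      rw [eq_div_iff hzne]; linear_combination hb
    rw [← hb, hC, ← ha]
    field_simp
    ring
  intro s hs
  have ha := hf2 s hs; have hb := hg2 s hs
  have hane := hfne s hs; have hbne := hgne s hs
  have hzne := h0 s hs; have hrne := hroot s hs
  have hdp : deriv (fun z => g z / f z * (c₁ * F z + c₂)) s = P1 s := (hP1 s hs).deriv
  have hA : HasDerivAt (fun z : ℂ => z ^ 2 + 1) (2 * s) s := by
    simpa using (hasDerivAt_pow 2 s).add_const 1
  have h2z : HasDerivAt (fun z : ℂ => 2 * z) 2 s := by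
    simpa using (hasDerivAt_id s).const_mul 2
  have hB : HasDerivAt (fun z => 2 * z * f z * g z)
      ((2 * f s + 2 * s * (1 / (2 * f s))) * g s + 2 * s * f s * ((2 * s - C) / (2 * g s))) s :=
    (h2z.mul (hfd s hs)).mul (hgd s hs)
  have hBne : 2 * s * f s * g s ≠ 0 :=
    mul_ne_zero (mul_ne_zero (mul_ne_zero two_ne_zero hzne) hane) hbne
  have hquot1 := hA.fun_div hB hBne
  have hlin : HasDerivAt (fun w => c₁ * F w + c₂) (c₁ * (f s ^ 3 / g s ^ 3)) s :=
    ((hF s hs).const_mul c₁).add_const c₂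
  have hT1 := hquot1.fun_mul hlin
  have hnum2 : HasDerivAt (fun z : ℂ => c₁ * z) (c₁ * 1) s := (hasDerivAt_id s).const_mul c₁
  have hden2 : HasDerivAt (fun w : ℂ => w ^ 2 - C * w - 1) (2 * s - C) s := by
    simpa using (((hasDerivAt_pow 2 s).sub ((hasDerivAt_id s).const_mul C)).sub_const 1)
  have hquot2 := hnum2.fun_div hden2 hrne
  have hQ : HasDerivAt P1 _ s := hT1.fun_add hquot2
  have hev : deriv (fun z => g z / f z * (c₁ * F z + c₂)) =ᶠ[nhds s] P1 :=
    Filter.eventually_of_mem (hU.mem_nhds hs) fun z hz => (hP1 z hz).deriv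
  have hdd : deriv (deriv (fun z => g z / f z * (c₁ * F z + c₂))) s = deriv P1 s :=
    hev.deriv_eq
  rw [hdd, hQ.deriv, hdp, hP1def]
  have hbig : 2 * f s * (2 * g s) * (2 * s * f s * g s) ^ 2 * (2 * s * f s * g s * g s ^ 3) ≠ 0 :=
    mul_ne_zero
      (mul_ne_zero (mul_ne_zero (mul_ne_zero two_ne_zero hane) (mul_ne_zero two_ne_zero hbne))
        (pow_ne_zero 2 hBne))
      (mul_ne_zero hBne (pow_ne_zero 3 hbne))
  beta_reduce
  generalize f s = a at ha hane ⊢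
  generalize g s = b at hb hbne ⊢
  have hC : C = (s ^ 2 - 1 - b ^ 2) / s := by
    rw [eq_div_iff hzne]; linear_combination hb
  rw [← hb, hC, ← ha]
  field_simp
  ring
end
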